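/- For every arbitrage rule ω = (1,i,j) with 1 < i < j (case k = 1), the conjugated matrix Q^{-1} B_ω Q equals I - e_{ij} e_{ij}^T, where B_ω = I - e_{ij}(e_{ij}^T + e_{1i}^T - e_{1j}^T) and Q = I + Σ_{2 ≤ m < n ≤ d} e_{mn}(e_{1n}^T - e_{1m}^T). -/

import Mathlib

open Matrix

/-- Index type for the coordinates of `ℝ^{d(d-1)/2}`: pairs `(i,j)` with `i < j`. -/
abbrev Pr (d : ℕ) := {p : Fin d × Fin d // p.1 < p.2}

/-- The pair `(i,j)` with `i < j` as an element of `Pr d`. -/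
def pr {d : ℕ} {i j : Fin d} (h : i < j) : Pr d := ⟨(i, j), h⟩

/-- `Eb p q = e_p e_q^T`, the matrix with a single `1` in position `(p,q)`. -/
noncomputable def Eb {d : ℕ} (p q : Pr d) : Matrix (Pr d) (Pr d) ℝ :=
  Matrix.single p q 1

/-- The matrix `B_ω` for the arbitrage rule `ω = (i,j,k)`, `i < j`, `k ≠ i,j`. -/
noncomputable def Bmat {d : ℕ} (i j k : Fin d) (hij : i < j) (hki : k ≠ i) (hkj : k ≠ j) :
    Matrix (Pr d) (Pr d) ℝ :=
  if h1 : k < i then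
    -- case k < i < j : B = I - e_{ij}(e_{ij}^T + e_{ki}^T - e_{kj}^T)
    1 - Eb (pr hij) (pr hij) - Eb (pr hij) (pr h1) + Eb (pr hij) (pr (h1.trans hij))
  else if h2 : k < j then
    -- case i < k < j : B = I - e_{ij}(e_{ij}^T - e_{ik}^T - e_{kj}^T)
    1 - Eb (pr hij) (pr hij) + Eb (pr hij) (pr (lt_of_le_of_ne (not_lt.1 h1) (Ne.symm hki)))
      + Eb (pr hij) (pr h2)
  else
    -- case i < j < k : B = I - e_{ij}(e_{ij}^T - e_{ik}^T + e_{jk}^T)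
    1 - Eb (pr hij) (pr hij)
      + Eb (pr hij) (pr (hij.trans (lt_of_le_of_ne (not_lt.1 h2) (Ne.symm hkj))))
      - Eb (pr hij) (pr (lt_of_le_of_ne (not_lt.1 h2) (Ne.symm hkj)))

/-- `Q = I + Σ_{2 ≤ i < j ≤ d} e_{ij}(e_{1j}^T - e_{1i}^T)`. -/
noncomputable def Qmat (d : ℕ) [NeZero d] : Matrix (Pr d) (Pr d) ℝ :=
  1 + ∑ p : Pr d,
    if h : (0 : Fin d) < p.1.1 then Eb p (pr (h.trans p.2)) - Eb p (pr h) else 0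

/-- `Q⁻¹ = I - Σ_{2 ≤ i < j ≤ d} e_{ij}(e_{1j}^T - e_{1i}^T)`. -/
noncomputable def Qinv (d : ℕ) [NeZero d] : Matrix (Pr d) (Pr d) ℝ :=
  1 - ∑ p : Pr d,
    if h : (0 : Fin d) < p.1.1 then Eb p (pr (h.trans p.2)) - Eb p (pr h) else 0

noncomputable def Smat (d : ℕ) [NeZero d] : Matrix (Pr d) (Pr d) ℝ :=
  ∑ p : Pr d,
    if h : (0 : Fin d) < p.1.1 then Eb p (pr (h.trans p.2)) - Eb p (pr h) else 0

lemma Eb_mul_Eb_of_ne {d : ℕ} {p q r s : Pr d} (h : q ≠ r) : Eb p q * Eb r s = 0 := by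
  simp only [Eb]; exact Matrix.single_mul_single_of_ne _ _ _ _ h _

lemma Eb_mul_Eb {d : ℕ} (p q s : Pr d) : Eb p q * Eb q s = Eb p s := by
  simp [Eb]

lemma pr_ne_of_fst {d : ℕ} {a b i j : Fin d} (hab : a < b) (hij : i < j) (h : a ≠ i) :
    pr hab ≠ pr hij := fun he => h (congrArg (fun x => x.1.1) he)

-- S * Eb p q = 0 when p.1 ≠ 0
lemma Smat_mul_Eb {d : ℕ} [NeZero d] {i j : Fin d} (hij : i < j) (h0i : (0:Fin d) < i)
    (q : Pr d) : Smat d * Eb (pr hij) q = 0 := by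
  rw [Smat, Finset.sum_mul]
  refine Finset.sum_eq_zero fun p _ => ?_
  by_cases h : (0:Fin d) < p.1.1
  · rw [dif_pos h, sub_mul, Eb_mul_Eb_of_ne (pr_ne_of_fst _ _ h0i.ne),
      Eb_mul_Eb_of_ne (pr_ne_of_fst _ _ h0i.ne), sub_zero]
  · rw [dif_neg h, zero_mul]

-- Eb p q * S = 0 when q.1 = 0
lemma Eb_mul_Smat_zero {d : ℕ} [NeZero d] {x : Fin d} (p : Pr d) (h0x : (0:Fin d) < x) :
    Eb p (pr h0x) * Smat d = 0 := by
  rw [Smat, Finset.mul_sum]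
  refine Finset.sum_eq_zero fun q _ => ?_
  by_cases h : (0:Fin d) < q.1.1
  · rw [dif_pos h, mul_sub, Eb_mul_Eb_of_ne, Eb_mul_Eb_of_ne, sub_zero]
    · exact fun he => h.ne' (congrArg (fun y => y.1.1) he).symm
    · exact fun he => h.ne' (congrArg (fun y => y.1.1) he).symm
  · rw [dif_neg h, mul_zero]

lemma Eb_mul_Smat_same {d : ℕ} [NeZero d] {i j : Fin d} (hij : i < j) (h0i : (0:Fin d) < i) :
    Eb (pr hij) (pr hij) * Smat d
      = Eb (pr hij) (pr (h0i.trans hij)) - Eb (pr hij) (pr h0i) := by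
  rw [Smat, Finset.mul_sum]
  rw [Finset.sum_eq_single (pr hij)]
  · rw [dif_pos (show (0:Fin d) < (pr hij).1.1 from h0i), mul_sub, Eb_mul_Eb, Eb_mul_Eb]; rfl
  · intro q _ hq
    by_cases h : (0:Fin d) < q.1.1
    · rw [dif_pos h, mul_sub, Eb_mul_Eb_of_ne hq.symm, Eb_mul_Eb_of_ne hq.symm, sub_zero]
    · rw [dif_neg h, mul_zero]
  · intro h; exact absurd (Finset.mem_univ _) h

lemma Smat_mul_Smat {d : ℕ} [NeZero d] : Smat d * Smat d = 0 := by
  rw [Smat, Finset.sum_mul]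
  refine Finset.sum_eq_zero fun p _ => ?_
  by_cases h : (0:Fin d) < p.1.1
  · rw [dif_pos h, sub_mul]
    have h1 : Eb p (pr (h.trans p.2)) * Smat d = 0 := Eb_mul_Smat_zero _ _
    have h2 : Eb p (pr h) * Smat d = 0 := Eb_mul_Smat_zero _ _
    rw [show (∑ p : Pr d, if h : (0 : Fin d) < p.1.1 then Eb p (pr (h.trans p.2)) - Eb p (pr h) else 0) = Smat d from rfl, h1, h2, sub_zero]
  · rw [dif_neg h, zero_mul]

theorem conj_case_k_eq_one (d : ℕ) [NeZero d] (hd : 3 ≤ d)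
    (i j : Fin d) (h0i : (0 : Fin d) < i) (hij : i < j) :
    Qinv d * Bmat i j 0 hij h0i.ne (h0i.trans hij).ne * Qmat d
      = 1 - Eb (pr hij) (pr hij) := by
  have hQ : Qmat d = 1 + Smat d := rfl
  have hQi : Qinv d = 1 - Smat d := rfl
  have hB : Bmat i j 0 hij h0i.ne (h0i.trans hij).ne
      = 1 - Eb (pr hij) (pr hij) - Eb (pr hij) (pr h0i)
        + Eb (pr hij) (pr (h0i.trans hij)) := by
    rw [Bmat, dif_pos h0i]
  rw [hQ, hQi, hB]
  have hSA := Smat_mul_Eb hij h0i (pr hij)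
  have hSB := Smat_mul_Eb hij h0i (pr h0i)
  have hSC := Smat_mul_Eb hij h0i (pr (h0i.trans hij))
  have hAS := Eb_mul_Smat_same hij h0i
  have hBS := Eb_mul_Smat_zero (pr hij) h0i
  have hCS := Eb_mul_Smat_zero (pr hij) (h0i.trans hij)
  have hSS := Smat_mul_Smat (d := d)
  simp only [mul_add, add_mul, mul_sub, sub_mul, mul_one, one_mul,
    hSA, hSB, hSC, hAS, hBS, hCS, hSS, zero_mul, mul_zero, add_zero, sub_zero, zero_add]
  abel
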